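/- Let G1 and G2 be cluster graphs on the same finite vertex set V. Suppose there is an injective partial map M from the set of connected components of G1 to the set of connected components of G2 such that Σ_X |X ∩ M(X)| ≥ |V| − d for some nonnegative integer d. Then there exists a set D ⊆ V with |D| ≤ d such that G1[V ∖ D] = G2[V ∖ D]. -/

import Mathlib

open SimpleGraph

/-- A cluster graph: every connected component is a complete graph. -/
def IsClusterGraph {V : Type*} (G : SimpleGraph V) : Prop :=
  ∀ u v : V, G.Reachable u v → u ≠ v → G.Adj u v

/-- An induced P3 on the ordered triple (u, v, w). -/
def InducedP3 {V : Type*} (G : SimpleGraph V) (u v w : V) : Prop :=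
  u ≠ v ∧ v ≠ w ∧ u ≠ w ∧ G.Adj u v ∧ G.Adj v w ∧ ¬ G.Adj u w

/-- The (unordered) triple {u, v, w} induces a P3: exactly two of the three pairs are edges. -/
def TripleP3 {V : Type*} (G : SimpleGraph V) (u v w : V) : Prop :=
  u ≠ v ∧ v ≠ w ∧ u ≠ w ∧
    ((G.Adj u v ∧ G.Adj v w ∧ ¬ G.Adj u w) ∨
     (G.Adj u v ∧ G.Adj u w ∧ ¬ G.Adj v w) ∨
     (G.Adj u w ∧ G.Adj v w ∧ ¬ G.Adj u v))

/-- The graph obtained from `G` by toggling the vertex pairs in `M`. -/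
def editGraph {V : Type*} (G : SimpleGraph V) (M : Set (Sym2 V)) : SimpleGraph V :=
  SimpleGraph.fromEdgeSet (symmDiff G.edgeSet M)

/-- `M` is a cluster editing set for `G`. -/
def IsClusterEditingSet {V : Type*} (G : SimpleGraph V) (M : Set (Sym2 V)) : Prop :=
  (∀ e ∈ M, ¬ e.IsDiag) ∧ IsClusterGraph (editGraph G M)

theorem matching_gives_cluster_agree {V : Type*} [Fintype V] (G1 G2 : SimpleGraph V)
    (h1 : IsClusterGraph G1) (h2 : IsClusterGraph G2) (d : ℕ)
    (dom : Finset G1.ConnectedComponent)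
    (M : G1.ConnectedComponent → G2.ConnectedComponent)
    (hinj : Set.InjOn M ↑dom)
    (hsum : Fintype.card V - d ≤ ∑ X ∈ dom, (X.supp ∩ (M X).supp).ncard) :
    ∃ D : Set V, D.ncard ≤ d ∧
      G1.induce (Dᶜ : Set V) = G2.induce (Dᶜ : Set V) := by
  classical
  set S : Set V := ⋃ X ∈ dom, (X.supp ∩ (M X).supp) with hS
  refine ⟨Sᶜ, ?_, ?_⟩
  · have hcard : S.ncard = ∑ X ∈ dom, (X.supp ∩ (M X).supp).ncard := by
      have : S.toFinset = dom.biUnion (fun X ↦ (X.supp ∩ (M X).supp).toFinset) := by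
        ext v; simp only [hS, Set.mem_toFinset, Set.mem_iUnion, Set.mem_inter_iff,
          ConnectedComponent.mem_supp_iff, Finset.mem_biUnion]
        tauto
      rw [Set.ncard_eq_toFinset_card', this, Finset.card_biUnion]
      · simp [Set.ncard_eq_toFinset_card']
      · intro x _ y _ hxy
        simp only [Function.onFun]
        rw [Set.disjoint_toFinset]
        exact ((G1.pairwise_disjoint_supp_connectedComponent hxy).mono
          Set.inter_subset_left Set.inter_subset_left)
    have h1 : S.ncard + Sᶜ.ncard = Fintype.card V := by
      rw [Set.ncard_add_ncard_compl S]; simp [Set.ncard_univ]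
    omega
  · rw [compl_compl]
    ext ⟨u, hu⟩ ⟨v, hv⟩
    simp only [comap_adj, Function.Embedding.coe_subtype]
    simp only [hS, Set.mem_iUnion, Set.mem_inter_iff, ConnectedComponent.mem_supp_iff] at hu hv
    obtain ⟨X, hXdom, hu1, hu2⟩ := hu
    obtain ⟨Y, hYdom, hv1, hv2⟩ := hv
    constructor
    · intro hadj
      have hne : u ≠ v := hadj.ne
      have : X = Y := by rw [← hu1, ← hv1]; exact ConnectedComponent.sound hadj.reachable
      apply h2 u v _ hne
      exact ConnectedComponent.exact (by rw [hu2, hv2, this])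
    · intro hadj
      have hne : u ≠ v := hadj.ne
      have : M X = M Y := by rw [← hu2, ← hv2]; exact ConnectedComponent.sound hadj.reachable
      have hXY : X = Y := hinj hXdom hYdom this
      apply h1 u v _ hne
      exact ConnectedComponent.exact (by rw [hu1, hv1, hXY])
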